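/- Let (μ̂_k)_{k=1}^m and (μ_k)_{k=1}^m be reals and (r_k), (r̄_k) positive reals with |μ̂_k - μ_k| ≤ r_k and r_k ≤ r̄_k for all k. Then ∑_{k=1}^m (μ̂_k·𝟙{|μ̂_k| > 2r̄_k} - μ_k·𝟙{|μ_k| > r_k})² ≤ 9 ∑_{k=1}^m r̄_k² · 𝟙{|μ_k| ≥ r_k}. -/

import Mathlib

theorem stmt_18 (m : ℕ) (μhat μ r rbar : Fin m → ℝ)
    (hr : ∀ k, 0 < r k) (hrbar : ∀ k, 0 < rbar k)
    (h1 : ∀ k, |μhat k - μ k| ≤ r k) (h2 : ∀ k, r k ≤ rbar k) :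
    ∑ k, ((if 2 * rbar k < |μhat k| then μhat k else 0) -
        (if r k < |μ k| then μ k else 0)) ^ 2 ≤
      9 * ∑ k, (rbar k) ^ 2 * (if r k ≤ |μ k| then 1 else 0) := by
  rw [Finset.mul_sum]
  apply Finset.sum_le_sum
  intro k _
  have hμhat : |μhat k| ≤ |μ k| + r k := by
    have := abs_sub_abs_le_abs_sub (μhat k) (μ k)
    linarith [h1 k]
  have hμ : |μ k| ≤ |μhat k| + r k := by
    have := abs_sub_abs_le_abs_sub (μ k) (μhat k)
    rw [abs_sub_comm] at this
    linarith [h1 k]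
  by_cases hind : r k ≤ |μ k|
  · simp only [hind, if_true, mul_one]
    have hbound : |(if 2 * rbar k < |μhat k| then μhat k else 0) -
        (if r k < |μ k| then μ k else 0)| ≤ 3 * rbar k := by
      by_cases ha : 2 * rbar k < |μhat k| <;> by_cases hb : r k < |μ k| <;>
        simp [ha, hb]
      · calc |μhat k - μ k| ≤ r k := h1 k
          _ ≤ 3 * rbar k := by linarith [h2 k, hrbar k]
      · -- keeps μhat, not μ: |μ| = r, |μhat| ≤ 2r ≤ 2r̄, contradiction
        exfalso
        have : |μhat k| ≤ 2 * r k := by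
          have : |μ k| = r k := le_antisymm (not_lt.mp hb) hind
          linarith
        linarith [h2 k]
      · calc |μ k| ≤ |μhat k| + r k := hμ
          _ ≤ 2 * rbar k + r k := by linarith [le_of_not_gt ha]
          _ ≤ 3 * rbar k := by linarith [h2 k]
      · linarith [hrbar k]
    calc ((if 2 * rbar k < |μhat k| then μhat k else 0) -
        (if r k < |μ k| then μ k else 0)) ^ 2 ≤ (3 * rbar k) ^ 2 := by
          rw [← sq_abs]
          apply pow_le_pow_left₀ (abs_nonneg _) hbound
      _ = 9 * rbar k ^ 2 := by ring
  · -- both indicators 0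
    have hb : ¬ r k < |μ k| := fun h => hind h.le
    have ha : ¬ 2 * rbar k < |μhat k| := by
      push_neg
      calc |μhat k| ≤ |μ k| + r k := hμhat
        _ ≤ 2 * r k := by linarith [not_le.mp hind]
        _ ≤ 2 * rbar k := by linarith [h2 k]
    simp [ha, hb, hind]
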